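/- With B_1 ⊆ B as above, an element x ∈ B satisfies d(x) = 0 for all B_1-linear derivations d of B if and only if x ∈ B_1. -/

import Mathlib

namespace Stmt11

variable {B : Type*} [CommRing B]

/-- The monomial `y^α`. -/
def mon (p t : ℕ) (y : Fin t → B) (α : Fin t → Fin p) : B :=
  ∏ j, y j ^ (α j : ℕ)

/-- The formal partial derivative with respect to `y i`, defined via coordinates `co`. -/
def der (p t : ℕ) (y : Fin t → B) (co : B → (Fin t → Fin p) → B) (i : Fin t) (b : B) : B :=
  ∑ α : Fin t → Fin p,
    ((α i : ℕ) : B) * co b α * ∏ j, y j ^ ((α j : ℕ) - if j = i then 1 else 0)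

section

variable (p t : ℕ) (B₁ : Subring B) (y : Fin t → B) (co : B → (Fin t → Fin p) → B)

/-- uniqueness hypothesis abbreviation -/
def Huni : Prop :=
  ∀ (b : B) (c : (Fin t → Fin p) → B), (∀ α, c α ∈ B₁) →
    b = ∑ α, c α * mon p t y α → c = co b

lemma co_basis (huni : Huni p t B₁ y co) (c : B) (hc : c ∈ B₁) (α : Fin t → Fin p) :
    co (c * mon p t y α) = fun β => if β = α then c else 0 := by
  refine (huni _ _ (fun β => ?_) ?_).symm
  · split
    · exact hc
    · exact zero_mem _
  · simp [ite_mul, Finset.sum_ite_eq']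

lemma der_basis (huni : Huni p t B₁ y co) (i : Fin t) (c : B) (hc : c ∈ B₁)
    (α : Fin t → Fin p) :
    der p t y co i (c * mon p t y α) =
      ((α i : ℕ) : B) * c * ∏ j, y j ^ ((α j : ℕ) - if j = i then 1 else 0) := by
  unfold der
  rw [co_basis p t B₁ y co huni c hc α]
  simp [mul_ite, ite_mul, Finset.sum_ite_eq']

lemma co_add (huni : Huni p t B₁ y co)
    (hmem : ∀ b α, co b α ∈ B₁)
    (hsum : ∀ b, b = ∑ α, co b α * mon p t y α) (a b : B) :
    co (a + b) = fun α => co a α + co b α := by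
  refine (huni _ _ (fun α => add_mem (hmem a α) (hmem b α)) ?_).symm
  simp only [add_mul, Finset.sum_add_distrib]
  rw [← hsum a, ← hsum b]

lemma co_zero (huni : Huni p t B₁ y co) : co 0 = fun _ => 0 := by
  refine (huni _ _ (fun α => zero_mem _) ?_).symm
  simp

lemma der_add (huni : Huni p t B₁ y co)
    (hmem : ∀ b α, co b α ∈ B₁)
    (hsum : ∀ b, b = ∑ α, co b α * mon p t y α) (i : Fin t) (a b : B) :
    der p t y co i (a + b) = der p t y co i a + der p t y co i b := by
  unfold der
  rw [co_add p t B₁ y co huni hmem hsum a b]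
  simp only [mul_add, add_mul, Finset.sum_add_distrib]

lemma der_const (hp : p.Prime) (huni : Huni p t B₁ y co) (i : Fin t) (c : B) (hc : c ∈ B₁) :
    der p t y co i c = 0 := by
  have h0 : c = c * mon p t y (fun _ => (⟨0, hp.pos⟩ : Fin p)) := by simp [mon]
  rw [h0, der_basis p t B₁ y co huni i c hc]
  simp

/-- the scalar/monomial identity behind the Leibniz rule, in characteristic `p`. -/
lemma key (hp : p.Prime) [CharP B p] (P : ℕ → B) (a b : ℕ) (ha : a < p) (hb : b < p) :
    (((a + b) % p : ℕ) : B) * P (p * ((a + b) / p) + ((a + b) % p - 1)) =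
      (b : B) * P (a + (b - 1)) + (a : B) * P ((a - 1) + b) := by
  rcases Nat.eq_zero_or_pos a with ha0 | ha1
  · subst ha0
    simp only [Nat.zero_add, zero_add]
    rw [Nat.mod_eq_of_lt hb, Nat.div_eq_of_lt hb]
    simp
  rcases Nat.eq_zero_or_pos b with hb0 | hb1
  · subst hb0
    simp only [Nat.add_zero, add_zero]
    rw [Nat.mod_eq_of_lt ha, Nat.div_eq_of_lt ha]
    simp
  have h1 : a + (b - 1) = a + b - 1 := by omega
  have h2 : (a - 1) + b = a + b - 1 := by omega
  rw [h1, h2, ← add_mul]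
  have hcast : (b : B) + (a : B) = ((a + b : ℕ) : B) := by push_cast; ring
  rw [hcast]
  by_cases hs : a + b < p
  · rw [Nat.mod_eq_of_lt hs, Nat.div_eq_of_lt hs]
    simp
  · push_neg at hs
    have hlt : a + b - p < p := by omega
    have hmod : (a + b) % p = a + b - p := by
      rw [Nat.mod_eq_sub_mod hs, Nat.mod_eq_of_lt hlt]
    have hdiv : p * ((a + b) / p) = p := by
      have := Nat.div_add_mod (a + b) p
      omega
    rw [hmod, hdiv]
    rcases Nat.eq_or_lt_of_le hs with heq | hlt2
    · rw [← heq]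
      have hz : ((p : ℕ) : B) = 0 := CharP.cast_eq_zero B p
      simp [Nat.sub_self, hz]
    · have h3 : p + (a + b - p - 1) = a + b - 1 := by omega
      rw [h3, Nat.cast_sub hs, CharP.cast_eq_zero B p, sub_zero]

lemma mul_mon (hp : p.Prime) (α β : Fin t → Fin p) :
    mon p t y α * mon p t y β =
      (∏ j, (y j ^ p) ^ (((α j : ℕ) + (β j : ℕ)) / p)) *
        mon p t y (fun j => ⟨((α j : ℕ) + (β j : ℕ)) % p, Nat.mod_lt _ hp.pos⟩) := by
  unfold mon
  rw [← Finset.prod_mul_distrib, ← Finset.prod_mul_distrib]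
  refine Finset.prod_congr rfl fun j _ => ?_
  rw [← pow_add, ← pow_mul, ← pow_add]
  congr 1
  exact (Nat.div_add_mod ((α j : ℕ) + (β j : ℕ)) p).symm

lemma der_leibniz_basis (hp : p.Prime) [CharP B p] (huni : Huni p t B₁ y co)
    (hFrob : ∀ b : B, b ^ p ∈ B₁) (i : Fin t) (c e : B) (hc : c ∈ B₁) (he : e ∈ B₁)
    (α β : Fin t → Fin p) :
    der p t y co i ((c * mon p t y α) * (e * mon p t y β)) =
      (c * mon p t y α) * der p t y co i (e * mon p t y β) +
        der p t y co i (c * mon p t y α) * (e * mon p t y β) := by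
  set s : Fin t → ℕ := fun j => (α j : ℕ) + (β j : ℕ) with hs
  set γ : Fin t → Fin p := fun j => ⟨s j % p, Nat.mod_lt _ hp.pos⟩ with hγ
  set U : B := ∏ j, (y j ^ p) ^ (s j / p) with hU
  set P : ℕ → B := fun n => ∏ j, y j ^ (if j = i then n else s j) with hP
  have hUmem : U ∈ B₁ := prod_mem fun j _ => pow_mem (hFrob (y j)) _
  have hprod : (c * mon p t y α) * (e * mon p t y β) = (c * e * U) * mon p t y γ := by
    have := mul_mon p t y hp α β
    calc (c * mon p t y α) * (e * mon p t y β)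
        = (c * e) * (mon p t y α * mon p t y β) := by ring
      _ = (c * e * U) * mon p t y γ := by rw [this]; ring
  have hUX : U * (∏ j, y j ^ ((γ j : ℕ) - if j = i then 1 else 0)) =
      P (p * (s i / p) + (s i % p - 1)) := by
    rw [hP, ← Finset.prod_mul_distrib]
    refine Finset.prod_congr rfl fun j _ => ?_
    rw [← pow_mul, ← pow_add]
    congr 1
    by_cases hji : j = i
    · subst hji; simp [hγ]
    · simp only [hji, if_false, hγ]
      have := Nat.div_add_mod (s j) p
      omega
  have hAY : mon p t y α * (∏ j, y j ^ ((β j : ℕ) - if j = i then 1 else 0)) =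
      P ((α i : ℕ) + ((β i : ℕ) - 1)) := by
    rw [hP, mon, ← Finset.prod_mul_distrib]
    refine Finset.prod_congr rfl fun j _ => ?_
    rw [← pow_add]
    congr 1
    by_cases hji : j = i
    · subst hji; simp
    · simp [hji, hs]
  have hZB : (∏ j, y j ^ ((α j : ℕ) - if j = i then 1 else 0)) * mon p t y β =
      P (((α i : ℕ) - 1) + (β i : ℕ)) := by
    rw [hP, mon, ← Finset.prod_mul_distrib]
    refine Finset.prod_congr rfl fun j _ => ?_
    rw [← pow_add]
    congr 1
    by_cases hji : j = i
    · subst hji; simp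
    · simp [hji, hs]
  rw [hprod, der_basis p t B₁ y co huni i _ (mul_mem (mul_mem hc he) hUmem) γ,
    der_basis p t B₁ y co huni i _ he β, der_basis p t B₁ y co huni i _ hc α]
  have hkey := key p hp P (α i : ℕ) (β i : ℕ) (α i).isLt (β i).isLt
  calc ((γ i : ℕ) : B) * (c * e * U) * ∏ j, y j ^ ((γ j : ℕ) - if j = i then 1 else 0)
      = (c * e) * (((s i % p : ℕ) : B) *
          (U * ∏ j, y j ^ ((γ j : ℕ) - if j = i then 1 else 0))) := by
        simp only [hγ]; ring
    _ = (c * e) * (((s i % p : ℕ) : B) * P (p * (s i / p) + (s i % p - 1))) := by rw [hUX]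
    _ = (c * e) * (((β i : ℕ) : B) * P ((α i : ℕ) + ((β i : ℕ) - 1)) +
          ((α i : ℕ) : B) * P (((α i : ℕ) - 1) + (β i : ℕ))) := by rw [← hkey]
    _ = c * mon p t y α * (((β i : ℕ) : B) * e *
            ∏ j, y j ^ ((β j : ℕ) - if j = i then 1 else 0)) +
          ((α i : ℕ) : B) * c * (∏ j, y j ^ ((α j : ℕ) - if j = i then 1 else 0)) *
            (e * mon p t y β) := by
        rw [← hAY, ← hZB]; ring

lemma der_leibniz (hp : p.Prime) [CharP B p] (huni : Huni p t B₁ y co)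
    (hmem : ∀ b α, co b α ∈ B₁)
    (hsum : ∀ b, b = ∑ α, co b α * mon p t y α)
    (hFrob : ∀ b : B, b ^ p ∈ B₁) (i : Fin t) (a b : B) :
    der p t y co i (a * b) = a * der p t y co i b + der p t y co i a * b := by
  let D : B →+ B := AddMonoidHom.mk' (der p t y co i)
    (der_add p t B₁ y co huni hmem hsum i)
  show D (a * b) = a * D b + D a * b
  have hab : a * b = ∑ α : Fin t → Fin p, ∑ β : Fin t → Fin p,
      (co a α * mon p t y α) * (co b β * mon p t y β) := by
    rw [← Finset.sum_mul_sum, ← hsum a, ← hsum b]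
  rw [hab, map_sum]
  have : ∀ α ∈ (Finset.univ : Finset (Fin t → Fin p)),
      D (∑ β : Fin t → Fin p, (co a α * mon p t y α) * (co b β * mon p t y β)) =
      ∑ β : Fin t → Fin p, ((co a α * mon p t y α) * D (co b β * mon p t y β) +
        D (co a α * mon p t y α) * (co b β * mon p t y β)) := by
    intro α _
    rw [map_sum]
    refine Finset.sum_congr rfl fun β _ => ?_
    exact der_leibniz_basis p t B₁ y co hp huni hFrob i _ _ (hmem a α) (hmem b β) α β
  rw [Finset.sum_congr rfl this]
  simp only [Finset.sum_add_distrib]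
  have e1 : (∑ α : Fin t → Fin p, ∑ β : Fin t → Fin p,
      (co a α * mon p t y α) * D (co b β * mon p t y β)) = a * D b := by
    rw [← Finset.sum_mul_sum, ← hsum a,
      ← map_sum D (fun β => co b β * mon p t y β) Finset.univ, ← hsum b]
  have e2 : (∑ α : Fin t → Fin p, ∑ β : Fin t → Fin p,
      D (co a α * mon p t y α) * (co b β * mon p t y β)) = D a * b := by
    rw [← Finset.sum_mul_sum,
      ← map_sum D (fun α => co a α * mon p t y α) Finset.univ, ← hsum a, ← hsum b]
  rw [e1, e2]

end

theorem killed_by_all_derivations_iff {B : Type*} [CommRing B] (p t : ℕ)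
    (hp : p.Prime) [CharP B p] (B₁ : Subring B)
    (hFrob : ∀ b : B, b ^ p ∈ B₁) (y : Fin t → B)
    (hbasis : ∀ b : B, ∃! c : (Fin t → Fin p) → B,
      (∀ α, c α ∈ B₁) ∧
      b = ∑ α : Fin t → Fin p, c α * ∏ i, y i ^ (α i : ℕ)) :
    ∀ x : B,
      (∀ d : B → B,
        ((∀ a b : B, d (a + b) = d a + d b) ∧
         (∀ a b : B, d (a * b) = a * d b + d a * b) ∧
         (∀ b ∈ B₁, d b = 0)) → d x = 0) ↔ x ∈ B₁ := by
  intro x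
  constructor
  · intro h
    set co : B → (Fin t → Fin p) → B := fun b => (hbasis b).choose with hco
    have hmem : ∀ b α, co b α ∈ B₁ := fun b => (hbasis b).choose_spec.1.1
    have hsum : ∀ b, b = ∑ α, co b α * mon p t y α := fun b => (hbasis b).choose_spec.1.2
    have huni : Huni p t B₁ y co := fun b c h1 h2 => (hbasis b).choose_spec.2 c ⟨h1, h2⟩
    -- each formal partial derivative kills x
    have hder : ∀ i : Fin t, der p t y co i x = 0 := by
      intro i
      exact h (der p t y co i)
        ⟨der_add p t B₁ y co huni hmem hsum i,
         der_leibniz p t B₁ y co hp huni hmem hsum hFrob i,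
         fun b hb => der_const p t B₁ y co hp huni i b hb⟩
    -- all nonconstant coordinates of x vanish
    have hvanish : ∀ α : Fin t → Fin p, α ≠ (fun _ => (⟨0, hp.pos⟩ : Fin p)) → co x α = 0 := by
      intro α hα
      obtain ⟨i, hi⟩ : ∃ i, (α i : ℕ) ≠ 0 := by
        by_contra hcon
        push_neg at hcon
        exact hα (funext fun i => Fin.ext (hcon i))
      -- the coordinate function of `der i x`
      set c' : (Fin t → Fin p) → B := fun β =>
        if hb : (β i : ℕ) + 1 < p then
          (((β i : ℕ) + 1 : ℕ) : B) * co x (Function.update β i ⟨(β i : ℕ) + 1, hb⟩)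
        else 0 with hc'
      have hc'mem : ∀ β, c' β ∈ B₁ := by
        intro β
        rw [hc']
        dsimp only
        split
        · exact mul_mem (natCast_mem B₁ _) (hmem x _)
        · exact zero_mem _
      have hrep : ∑ β : Fin t → Fin p, c' β * mon p t y β = der p t y co i x := by
        unfold der
        rw [← Finset.sum_filter_add_sum_filter_not Finset.univ
            (fun β : Fin t → Fin p => (β i : ℕ) + 1 < p),
          ← Finset.sum_filter_add_sum_filter_not Finset.univ
            (fun α : Fin t → Fin p => 0 < (α i : ℕ))]
        have hz1 : ∑ β ∈ Finset.univ.filter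
            (fun β : Fin t → Fin p => ¬ ((β i : ℕ) + 1 < p)), c' β * mon p t y β = 0 := by
          refine Finset.sum_eq_zero fun β hβ => ?_
          rw [Finset.mem_filter] at hβ
          rw [hc']
          dsimp only
          rw [dif_neg hβ.2, zero_mul]
        have hz2 : ∑ α ∈ Finset.univ.filter
            (fun α : Fin t → Fin p => ¬ (0 < (α i : ℕ))),
            ((α i : ℕ) : B) * co x α * ∏ j, y j ^ ((α j : ℕ) - if j = i then 1 else 0) = 0 := by
          refine Finset.sum_eq_zero fun α hα' => ?_
          rw [Finset.mem_filter] at hα'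
          have : (α i : ℕ) = 0 := by omega
          rw [this]
          simp
        rw [hz1, hz2, add_zero, add_zero]
        refine Finset.sum_nbij'
          (fun β => Function.update β i (⟨((β i : ℕ) + 1) % p, Nat.mod_lt _ hp.pos⟩ : Fin p))
          (fun α => Function.update α i
            (⟨(α i : ℕ) - 1, Nat.lt_of_le_of_lt (Nat.sub_le _ _) (α i).isLt⟩ : Fin p))
          ?_ ?_ ?_ ?_ ?_
        · intro β hβ
          rw [Finset.mem_filter] at hβ ⊢
          refine ⟨Finset.mem_univ _, ?_⟩
          simp only [Function.update_self]
          rw [Nat.mod_eq_of_lt hβ.2]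
          omega
        · intro α hα'
          rw [Finset.mem_filter] at hα' ⊢
          refine ⟨Finset.mem_univ _, ?_⟩
          simp only [Function.update_self]
          omega
        · intro β hβ
          rw [Finset.mem_filter] at hβ
          funext j
          by_cases hji : j = i
          · subst hji
            simp only [Function.update_self]
            apply Fin.ext
            simp [Nat.mod_eq_of_lt hβ.2]
          · simp [Function.update_of_ne hji]
        · intro α hα'
          rw [Finset.mem_filter] at hα'
          funext j
          by_cases hji : j = i
          · subst hji
            simp only [Function.update_self]
            apply Fin.ext
            dsimp only
            rw [Nat.mod_eq_of_lt (by omega)]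
            omega
          · simp [Function.update_of_ne hji]
        · intro β hβ
          rw [Finset.mem_filter] at hβ
          have hmodeq : ((β i : ℕ) + 1) % p = (β i : ℕ) + 1 := Nat.mod_eq_of_lt hβ.2
          have hupd : Function.update β i
              (⟨((β i : ℕ) + 1) % p, Nat.mod_lt _ hp.pos⟩ : Fin p) =
              Function.update β i (⟨(β i : ℕ) + 1, hβ.2⟩ : Fin p) :=
            congrArg (Function.update β i) (Fin.ext hmodeq)
          have hmon : mon p t y β =
              ∏ j, y j ^ (((Function.update β i (⟨(β i : ℕ) + 1, hβ.2⟩ : Fin p)) j : ℕ) -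
                if j = i then 1 else 0) := by
            unfold mon
            refine Finset.prod_congr rfl fun j _ => ?_
            congr 1
            by_cases hji : j = i
            · subst hji; simp
            · simp [Function.update_of_ne hji, hji]
          rw [hc']
          dsimp only
          rw [dif_pos hβ.2, hupd]
          simp only [Function.update_self, Fin.val_mk]
          rw [hmon]
      have hc'zero : c' = co 0 := by
        refine huni 0 c' hc'mem ?_
        rw [hrep, hder i]
      have hall : ∀ β, c' β = 0 := by
        intro β
        rw [hc'zero, co_zero p t B₁ y co huni]
      -- evaluate at β = update α i (α i - 1)
      have hαi_lt : (α i : ℕ) - 1 < p := Nat.lt_of_le_of_lt (Nat.sub_le _ _) (α i).isLt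
      set β : Fin t → Fin p := Function.update α i (⟨(α i : ℕ) - 1, hαi_lt⟩ : Fin p) with hβdef
      have hβi : (β i : ℕ) = (α i : ℕ) - 1 := by rw [hβdef, Function.update_self]
      have hblt : (β i : ℕ) + 1 < p := by
        rw [hβi]
        have := (α i).isLt
        omega
      have hβback : Function.update β i (⟨(β i : ℕ) + 1, hblt⟩ : Fin p) = α := by
        funext j
        by_cases hji : j = i
        · subst hji
          rw [Function.update_self]
          apply Fin.ext
          dsimp only
          rw [hβi]
          omega
        · rw [Function.update_of_ne hji, hβdef, Function.update_of_ne hji]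
      have heval := hall β
      rw [hc'] at heval
      dsimp only at heval
      rw [dif_pos hblt, hβback] at heval
      have hsc : ((((β i : ℕ) + 1 : ℕ)) : B) = (((α i : ℕ) : ℕ) : B) := by
        congr 1
        rw [hβi]; omega
      rw [hsc] at heval
      -- cancel the unit scalar (α i) mod p
      have hnd : ¬ p ∣ (α i : ℕ) := by
        intro hdvd
        have := Nat.le_of_dvd (by omega) hdvd
        have := (α i).isLt
        omega
      have hcop : Nat.Coprime (α i : ℕ) p :=
        Nat.coprime_comm.mp (hp.coprime_iff_not_dvd.mpr hnd)
      obtain ⟨m, -, hm⟩ := Nat.exists_mul_mod_eq_one_of_coprime hcop hp.one_lt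
      have hd := Nat.div_add_mod ((α i : ℕ) * m) p
      rw [hm] at hd
      have hcast1 : (((α i : ℕ) * m : ℕ) : B) = 1 := by
        calc (((α i : ℕ) * m : ℕ) : B)
            = ((p * ((α i : ℕ) * m / p) + 1 : ℕ) : B) := by rw [hd]
          _ = 1 := by push_cast [CharP.cast_eq_zero B p]; ring
      calc co x α = 1 * co x α := (one_mul _).symm
        _ = (((α i : ℕ) * m : ℕ) : B) * co x α := by rw [hcast1]
        _ = (m : B) * (((α i : ℕ) : B) * co x α) := by push_cast; ring
        _ = 0 := by rw [heval, mul_zero]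
    have hx := hsum x
    rw [Finset.sum_eq_single (fun _ => (⟨0, hp.pos⟩ : Fin p))
      (fun β _ hβ => by rw [hvanish β hβ, zero_mul])
      (fun hn => absurd (Finset.mem_univ _) hn)] at hx
    have hmon1 : mon p t y (fun _ => (⟨0, hp.pos⟩ : Fin p)) = 1 := by simp [mon]
    rw [hmon1, mul_one] at hx
    rw [hx]
    exact hmem x _
  · rintro hx d ⟨_, _, h3⟩
    exact h3 x hx

end Stmt11

theorem killed_by_all_derivations_iff {B : Type*} [CommRing B] (p t : ℕ)
    (hp : p.Prime) [CharP B p] (B₁ : Subring B)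
    (hFrob : ∀ b : B, b ^ p ∈ B₁) (y : Fin t → B)
    (hbasis : ∀ b : B, ∃! c : (Fin t → Fin p) → B,
      (∀ α, c α ∈ B₁) ∧
      b = ∑ α : Fin t → Fin p, c α * ∏ i, y i ^ (α i : ℕ)) :
    ∀ x : B,
      (∀ d : B → B,
        ((∀ a b : B, d (a + b) = d a + d b) ∧
         (∀ a b : B, d (a * b) = a * d b + d a * b) ∧
         (∀ b ∈ B₁, d b = 0)) → d x = 0) ↔ x ∈ B₁ :=
  Stmt11.killed_by_all_derivations_iff p t hp B₁ hFrob y hbasis
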